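/- (Influence of a sample on a differentiable functional of the parameters.) For any function f : E → ℝ differentiable at θ*, the map ε ↦ f(θ(ε)) is differentiable at 0 with derivative d/dε f(θ(ε))|_{ε=0} = −⟨∇f(θ*), H⁻¹(∇g(θ*))⟩. -/

import Mathlib

/-- influence of a sample on a differentiable functional of the parameters:
under the setting of the influence function, for any `f : E → ℝ` differentiable at `θ*`,
the map `ε ↦ f(θ(ε))` is differentiable at `0` with derivative
`−⟨∇f(θ*), H⁻¹(∇g(θ*))⟩`. -/
theorem influence_on_functional
    {E : Type*} [NormedAddCommGroup E] [InnerProductSpace ℝ E] [FiniteDimensional ℝ E]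
    (L g : E → ℝ) (hL : ContDiff ℝ 2 L) (hg : ContDiff ℝ 1 g)
    (θ : ℝ → E) (θs : E) (hθ0 : θ 0 = θs) (hθ : DifferentiableAt ℝ θ 0)
    (H : E ≃L[ℝ] E) (hH : (H : E →L[ℝ] E) = fderiv ℝ (gradient L) θs)
    (hcrit : ∀ᶠ ε in nhds (0 : ℝ), gradient L (θ ε) + ε • gradient g (θ ε) = 0)
    (f : E → ℝ) (hf : DifferentiableAt ℝ f θs) :
    HasDerivAt (fun ε => f (θ ε))
      (-(@inner ℝ E _ (gradient f θs) (H.symm (gradient g θs)))) 0 := by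
  set v := deriv θ 0 with hvdef
  have hv : HasDerivAt θ v 0 := hθ.hasDerivAt
  -- gradient L is C¹
  have hgradL : ContDiff ℝ 1 (gradient L) := by
    have h1 : ContDiff ℝ 1 (fderiv ℝ L) := hL.fderiv_right (by norm_num)
    exact ((InnerProductSpace.toDual ℝ E).symm.contDiff).comp h1
  have hA : HasFDerivAt (gradient L) (H : E →L[ℝ] E) θs := by
    rw [hH]
    exact (hgradL.differentiable one_ne_zero θs).hasFDerivAt
  rw [← hθ0] at hA
  have h1 : HasDerivAt (fun ε => gradient L (θ ε)) ((H : E →L[ℝ] E) v) 0 :=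
    hA.comp_hasDerivAt 0 hv
  -- derivative of ε • gradient g (θ ε) at 0 is gradient g θs
  have hc : ContinuousAt (fun ε : ℝ => gradient g (θ ε)) 0 := by
    have hcg : Continuous (gradient g) := by
      have := hg.continuous_fderiv one_ne_zero
      exact ((InnerProductSpace.toDual ℝ E).symm.continuous).comp this
    exact hcg.continuousAt.comp hθ.continuousAt
  have h2 : HasDerivAt (fun ε : ℝ => ε • gradient g (θ ε)) (gradient g θs) 0 := by
    rw [hasDerivAt_iff_tendsto_slope]
    have ht : Filter.Tendsto (fun ε : ℝ => gradient g (θ ε)) (nhdsWithin 0 {(0:ℝ)}ᶜ)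
        (nhds (gradient g θs)) := by
      have := hc.tendsto
      rw [hθ0] at this
      exact this.mono_left nhdsWithin_le_nhds
    refine ht.congr' ?_
    filter_upwards [self_mem_nhdsWithin] with ε hε
    have hε' : ε ≠ 0 := hε
    simp [slope, hε', smul_smul, inv_mul_cancel₀ hε']
  have hsum : HasDerivAt (fun ε => gradient L (θ ε) + ε • gradient g (θ ε))
      ((H : E →L[ℝ] E) v + gradient g θs) 0 := h1.add h2
  have hzero : HasDerivAt (fun ε => gradient L (θ ε) + ε • gradient g (θ ε)) (0 : E) 0 :=
    (hasDerivAt_const (0:ℝ) (0:E)).congr_of_eventuallyEq hcrit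
  have heq : (H : E →L[ℝ] E) v + gradient g θs = 0 := hsum.unique hzero
  have hveq : v = -(H.symm (gradient g θs)) := by
    have h3 : (H : E →L[ℝ] E) v = -(gradient g θs) := by
      rw [eq_neg_iff_add_eq_zero]; exact heq
    have := congrArg H.symm h3
    simpa using this
  -- conclude via the chain rule for f
  have hff : HasFDerivAt f (fderiv ℝ f θs) (θ 0) := by rw [hθ0]; exact hf.hasFDerivAt
  have hfinal : HasDerivAt (fun ε => f (θ ε)) (fderiv ℝ f θs v) 0 :=
    hff.comp_hasDerivAt 0 hv
  have hkey : fderiv ℝ f θs v = -(@inner ℝ E _ (gradient f θs) (H.symm (gradient g θs))) := by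
    have : (@inner ℝ E _ (gradient f θs) v) = fderiv ℝ f θs v :=
      InnerProductSpace.toDual_symm_apply
    rw [← this, hveq, inner_neg_right]
  rw [← hkey]
  exact hfinal
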